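/- Let n ≥ 1 be an integer. Then 1/2 + Σ_{j=1}^{n+1} (−1)^{j+1}·((2j−3)/(2(2j−1)))·C(n+1,j) = −Σ_{k=1}^{n} (2k)!!/(2k+1)!!. In particular, the coefficient c_1 of the auxiliary function h equals −B_n, where B_n = Σ_{k=1}^{n} (2k)!!/(2k+1)!!. -/

import Mathlib

open Finset


open Finset

lemma key : ∀ (m : ℕ) (x : ℝ), (∀ j : ℕ, x + j ≠ 0) →
    ∑ j ∈ range (m+1), (-1:ℝ)^j * (m.choose j) / (x + j)
      = (m.factorial : ℝ) / ∏ i ∈ range (m+1), (x + i) := by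
  intro m
  induction m with
  | zero => intro x hx; simp
  | succ m ih =>
    intro x hx
    have hx1 : ∀ j : ℕ, (x+1) + j ≠ 0 := by
      intro j
      have h := hx (j+1)
      push_cast at h ⊢
      intro hc; apply h; linarith
    have h0 : x ≠ 0 := by simpa using hx 0
    have hP : (∏ i ∈ range (m+1), (x + i)) ≠ 0 :=
      Finset.prod_ne_zero_iff.2 fun i _ => hx i
    have hP' : (∏ i ∈ range (m+1), ((x+1) + i)) ≠ 0 :=
      Finset.prod_ne_zero_iff.2 fun i _ => hx1 i
    rw [Finset.sum_range_succ']
    push_cast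
    have hsplit : ∀ j ∈ range (m+1), (-1:ℝ)^(j+1) * ((m+1).choose (j+1)) / (x + (↑j+1))
        = (-((-1:ℝ)^j * (m.choose j) / ((x+1) + j)))
          + (-((-1:ℝ)^j * (m.choose (j+1)) / (x + (↑j+1)))) := by
      intro j _
      have hd : x + (↑j+1) = (x+1) + (j:ℝ) := by ring
      rw [Nat.choose_succ_succ]
      push_cast
      rw [hd]
      ring
    rw [Finset.sum_congr rfl hsplit, Finset.sum_add_distrib, Finset.sum_neg_distrib,
      Finset.sum_neg_distrib, ih (x+1) hx1]
    -- compute the second sum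
    have ihx := ih x hx
    rw [Finset.sum_range_succ'] at ihx
    push_cast at ihx
    have hB : ∑ j ∈ range (m+1), (-1:ℝ)^j * (m.choose (j+1)) / (x + (↑j+1))
        = 1/x - (m.factorial : ℝ) / ∏ i ∈ range (m+1), (x + i) := by
      rw [Finset.sum_range_succ]
      simp only [Nat.choose_succ_self, Nat.cast_zero, mul_zero, zero_div, add_zero]
      have hneg : ∀ j ∈ range m, (-1:ℝ)^(j+1) * (m.choose (j+1)) / (x + (↑j+1))
          = -((-1:ℝ)^j * (m.choose (j+1)) / (x + (↑j+1))) := by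
        intro j _; ring
      rw [Finset.sum_congr rfl hneg, Finset.sum_neg_distrib] at ihx
      push_cast at ihx
      simp only [pow_zero, one_mul, Nat.choose_zero_right, add_zero] at ihx
      push_cast at ihx
      linarith
    rw [hB]
    -- now pure algebra with the products
    have hQ1 : ∏ i ∈ range (m+2), (x + i) = (∏ i ∈ range (m+1), ((x+1) + i)) * x := by
      rw [Finset.prod_range_succ']
      push_cast
      simp only [add_zero]
      congr 1
      apply Finset.prod_congr rfl
      intro i _; push_cast; ring
    have hQ2 : ∏ i ∈ range (m+2), (x + i)
        = (∏ i ∈ range (m+1), (x + i)) * (x + (m+1)) := by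
      rw [Finset.prod_range_succ]; push_cast; ring_nf
    have hPP : (∏ i ∈ range (m+1), ((x+1) + i)) * x
        = (∏ i ∈ range (m+1), (x + i)) * (x + (m+1)) := by rw [← hQ1, hQ2]
    rw [hQ2]
    have hfac : (((m+1).factorial : ℕ) : ℝ) = ((m:ℝ)+1) * (m.factorial : ℝ) := by
      push_cast [Nat.factorial_succ]; ring
    have hxm : x + ((m:ℝ)+1) ≠ 0 := by
      have := hx (m+1); push_cast at this; intro hc; apply this; linarith
    push_cast
    rw [hfac]
    have hP'eq : (∏ i ∈ range (m+1), ((x+1) + (i:ℝ)))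
        = (∏ i ∈ range (m+1), (x + (i:ℝ))) * (x + ((m:ℝ)+1)) / x := by
      field_simp
      linear_combination hPP
    rw [hP'eq]
    simp only [Nat.choose_zero_right, Nat.cast_one, pow_zero, one_mul, add_zero]
    field_simp
    ring

lemma sum_Icc_one (f : ℕ → ℝ) : ∀ m : ℕ, ∑ j ∈ Icc 1 (m+1), f j = ∑ j ∈ range (m+1), f (j+1) := by
  intro m
  induction m with
  | zero => simp
  | succ m ih => rw [Finset.sum_Icc_succ_top (by omega), ih, ← Finset.sum_range_succ]

lemma prod_half : ∀ m : ℕ, ∏ i ∈ range (m+2), ((-1/2 : ℝ) + i)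
    = -(((2*m+1).doubleFactorial : ℝ))/2^(m+2) := by
  intro m
  induction m with
  | zero => norm_num [Nat.doubleFactorial]
  | succ m ih =>
    rw [Finset.prod_range_succ, ih]
    have h2 : 2*(m+1)+1 = (2*m+1)+2 := by ring
    rw [h2, Nat.doubleFactorial_add_two]
    push_cast
    field_simp
    ring

lemma Bsum : ∀ n : ℕ, ∑ k ∈ Icc 1 n, (((2*k).doubleFactorial : ℝ))/(((2*k+1).doubleFactorial : ℝ))
    = 2*((n:ℝ)+1)*(((2*n).doubleFactorial : ℝ))/(((2*n+1).doubleFactorial : ℝ)) - 2 := by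
  intro n
  induction n with
  | zero => simp [Nat.doubleFactorial]
  | succ n ih =>
    rw [Finset.sum_Icc_succ_top (by omega), ih]
    have e1 : (2*n+2).doubleFactorial = (2*n+2) * (2*n).doubleFactorial :=
      Nat.doubleFactorial_add_two _
    have e2 : (2*n+2+1).doubleFactorial = (2*n+3) * (2*n+1).doubleFactorial := by
      have h : 2*n+2+1 = (2*n+1)+2 := by ring
      rw [h, Nat.doubleFactorial_add_two]
    have e3 : 2*(n+1) = 2*n+2 := by ring
    have e4 : 2*(n+1)+1 = 2*n+2+1 := by ring
    rw [e3, e1, e2]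
    have hd : (((2*n+1).doubleFactorial : ℕ):ℝ) ≠ 0 :=
      Nat.cast_ne_zero.2 (Nat.doubleFactorial_pos _).ne'
    push_cast
    field_simp
    ring



/-- For every integer `n ≥ 1`,
`1/2 + Σ_{j=1}^{n+1} (−1)^{j+1}·((2j−3)/(2(2j−1)))·C(n+1,j) = −Σ_{k=1}^{n} (2k)‼/(2k+1)‼`,
i.e. the coefficient `c₁` of the auxiliary function `h` equals `−Bₙ`. -/
theorem stmt13 (n : ℕ) (hn : 1 ≤ n) :
    (1 / 2 : ℝ) +
        ∑ j ∈ Finset.Icc 1 (n + 1),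
          (-1 : ℝ) ^ (j + 1) * ((2 * (j : ℝ) - 3) / (2 * (2 * (j : ℝ) - 1))) *
            ((n + 1).choose j : ℝ) =
      -∑ k ∈ Finset.Icc 1 n,
          (Nat.doubleFactorial (2 * k) : ℝ) / (Nat.doubleFactorial (2 * k + 1) : ℝ) := by
  have hx : ∀ j : ℕ, (-1/2 : ℝ) + j ≠ 0 := by
    intro j
    rcases j with _ | j
    · norm_num
    · have hj : (0:ℝ) ≤ j := Nat.cast_nonneg _
      push_cast
      intro hc; linarith
  have hdf : (((2*n+1).doubleFactorial : ℕ):ℝ) ≠ 0 :=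
    Nat.cast_ne_zero.2 (Nat.doubleFactorial_pos _).ne'
  -- the key sum
  have hK := key (n+1) (-1/2) hx
  rw [show n+1+1 = n+2 from rfl, prod_half n, Finset.sum_range_succ'] at hK
  push_cast at hK
  norm_num at hK
  -- alternating sum of binomial coefficients
  have hA0 : ((∑ i ∈ range (n+2), (-1:ℤ)^i * ((n+1).choose i) : ℤ) : ℝ) = 0 := by
    rw [show n+2 = (n+1)+1 from rfl, Int.alternating_sum_range_choose_of_ne (by omega)]
    simp
  push_cast at hA0
  rw [Finset.sum_range_succ'] at hA0
  norm_num at hA0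
  -- split the main sum
  have hmain : ∑ j ∈ Icc 1 (n+1), (-1:ℝ)^(j+1) * ((2*(j:ℝ)-3)/(2*(2*(j:ℝ)-1))) * ((n+1).choose j)
      = ∑ j ∈ range (n+1), ((-(1/2)) * ((-1:ℝ)^(j+1) * (((n+1).choose (j+1)):ℝ))
        + (1/2) * ((-1:ℝ)^(j+1) * (((n+1).choose (j+1)):ℝ) / (-(1/2) + ((j:ℝ)+1)))) := by
    rw [sum_Icc_one (fun j => (-1:ℝ)^(j+1) * ((2*(j:ℝ)-3)/(2*(2*(j:ℝ)-1))) * ((n+1).choose j)) n]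
    apply Finset.sum_congr rfl
    intro j _
    have hj : (0:ℝ) ≤ (j:ℝ) := Nat.cast_nonneg _
    push_cast
    have e1 : (2*(2*((j:ℝ)+1)-1)) = 2*(2*(j:ℝ)+1) := by ring
    have e2 : (-(1/2:ℝ)+((j:ℝ)+1)) = (2*(j:ℝ)+1)/2 := by ring
    rw [e1, e2]
    have h4 : (2*(j:ℝ)+1) ≠ 0 := by positivity
    field_simp
    ring
  rw [hmain, Finset.sum_add_distrib, ← Finset.mul_sum, ← Finset.mul_sum, Bsum n]
  -- evaluate the two sums
  have hS1 : ∑ j ∈ range (n+1), (-1:ℝ)^(j+1) * (((n+1).choose (j+1)):ℝ) = -1 := by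
    linarith
  have h2n : (((2*n).doubleFactorial : ℕ):ℝ) = 2^n * (n.factorial:ℝ) := by
    rw [Nat.doubleFactorial_two_mul]; push_cast; ring
  have hfac : (((n+1).factorial : ℕ):ℝ) = ((n:ℝ)+1) * (n.factorial:ℝ) := by
    rw [Nat.factorial_succ]; push_cast; ring
  rw [hfac] at hK
  have hval : ((n:ℝ)+1) * (n.factorial:ℝ) / (-(((2*n+1).doubleFactorial : ℕ):ℝ) / 2^(n+2))
      = -(2^(n+2) * (((n:ℝ)+1) * (n.factorial:ℝ))) / (((2*n+1).doubleFactorial : ℕ):ℝ) := by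
    rw [div_div_eq_mul_div, div_neg, neg_div]
    ring
  rw [hval] at hK
  have hS2 : ∑ j ∈ range (n+1), (-1:ℝ)^(j+1) * (((n+1).choose (j+1)):ℝ) / (-(1/2) + ((j:ℝ)+1))
      = 2 + -(2^(n+2) * (((n:ℝ)+1) * (n.factorial:ℝ))) / (((2*n+1).doubleFactorial : ℕ):ℝ) := by
    linarith
  rw [hS1, hS2, h2n]
  field_simp
  ring
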